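/- For every γ ∈ (0, min{1/L_f, γ_g}), inf φ_γ = inf φ and argmin φ_γ = argmin φ. -/

import Mathlib

open Set Filter Topology

/-- The majorizing model `ℓ_γ(z; x) = f(x) + ⟨∇f(x), z−x⟩ + ‖z−x‖²/(2γ) + g(z)`. -/
noncomputable def linQ {n : ℕ} (f : EuclideanSpace ℝ (Fin n) → ℝ)
    (f' : EuclideanSpace ℝ (Fin n) → EuclideanSpace ℝ (Fin n))
    (g : EuclideanSpace ℝ (Fin n) → EReal) (γ : ℝ)
    (x z : EuclideanSpace ℝ (Fin n)) : EReal :=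
  ((f x + (inner ℝ (f' x) (z - x) : ℝ) + ‖z - x‖ ^ 2 / (2 * γ) : ℝ) : EReal) + g z

/-- The forward-backward operator `T_γ(x)`: the set of minimizers of `z ↦ ℓ_γ(z; x)`. -/
noncomputable def Tset {n : ℕ} (f : EuclideanSpace ℝ (Fin n) → ℝ)
    (f' : EuclideanSpace ℝ (Fin n) → EuclideanSpace ℝ (Fin n))
    (g : EuclideanSpace ℝ (Fin n) → EReal) (γ : ℝ)
    (x : EuclideanSpace ℝ (Fin n)) : Set (EuclideanSpace ℝ (Fin n)) :=
  {z | ∀ w, linQ f f' g γ x z ≤ linQ f f' g γ x w}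

/-- The forward-backward envelope `φ_γ(x) = inf_z ℓ_γ(z; x)`. -/
noncomputable def fbe {n : ℕ} (f : EuclideanSpace ℝ (Fin n) → ℝ)
    (f' : EuclideanSpace ℝ (Fin n) → EuclideanSpace ℝ (Fin n))
    (g : EuclideanSpace ℝ (Fin n) → EReal) (γ : ℝ)
    (x : EuclideanSpace ℝ (Fin n)) : EReal :=
  ⨅ z, linQ f f' g γ x z

/-- `g + ‖·‖²/(2γ)` is bounded below by a real constant. -/
def ProxBddBelow {n : ℕ} (g : EuclideanSpace ℝ (Fin n) → EReal) (γ : ℝ) : Prop :=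
  ∃ c : ℝ, ∀ z, (c : EReal) ≤ g z + ((‖z‖ ^ 2 / (2 * γ) : ℝ) : EReal)

/-- `g` is proper: not identically `⊤`, and never `⊥`. -/
def ProperFn {n : ℕ} (g : EuclideanSpace ℝ (Fin n) → EReal) : Prop :=
  (∃ x, g x ≠ ⊤) ∧ ∀ x, g x ≠ ⊥

/-- The criticality threshold `Γ(x) = sup({γ > 0 : x ∈ T_γ(x)} ∪ {0})`. -/
noncomputable def critThresh {n : ℕ} (f : EuclideanSpace ℝ (Fin n) → ℝ)
    (f' : EuclideanSpace ℝ (Fin n) → EuclideanSpace ℝ (Fin n))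
    (g : EuclideanSpace ℝ (Fin n) → EReal)
    (x : EuclideanSpace ℝ (Fin n)) : ℝ :=
  sSup ({γ : ℝ | 0 < γ ∧ x ∈ Tset f f' g γ x} ∪ {0})

set_option maxHeartbeats 1000000 in
lemma descent_lemma {n : ℕ} (f : EuclideanSpace ℝ (Fin n) → ℝ)
    (f' : EuclideanSpace ℝ (Fin n) → EuclideanSpace ℝ (Fin n))
    (hgrad : ∀ x, HasGradientAt f (f' x) x)
    (Lf : ℝ) (hLf : 0 < Lf) (hlip : LipschitzWith (Real.toNNReal Lf) f')
    (x z : EuclideanSpace ℝ (Fin n)) :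
    f z ≤ f x + (inner ℝ (f' x) (z - x) : ℝ) + Lf / 2 * ‖z - x‖ ^ 2 := by
  set v := z - x with hv
  have hline : ∀ t : ℝ, HasDerivAt (fun t : ℝ => x + t • v) v t := by
    intro t
    simpa using ((hasDerivAt_id t).smul_const v).const_add x
  have hcf' : Continuous f' := hlip.continuous
  have hderiv : ∀ t : ℝ, HasDerivAt (fun t : ℝ => f (x + t • v))
      (inner ℝ (f' (x + t • v)) v : ℝ) t := by
    intro t
    have := (hgrad (x + t • v)).hasFDerivAt.comp_hasDerivAt t (hline t)
    simp [InnerProductSpace.toDual_apply_apply] at this; exact this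
  have hcont : Continuous fun t : ℝ => (inner ℝ (f' (x + t • v)) v : ℝ) := by
    exact Continuous.inner (hcf'.comp (by continuity)) continuous_const
  have key : ∫ t in (0:ℝ)..1, (inner ℝ (f' (x + t • v)) v : ℝ) = f z - f x := by
    have := intervalIntegral.integral_eq_sub_of_hasDerivAt
      (f := fun t : ℝ => f (x + t • v)) (fun t _ => hderiv t)
      (hcont.intervalIntegrable 0 1)
    simpa [hv] using this
  have hbound : ∀ t ∈ Set.Icc (0:ℝ) 1,
      (inner ℝ (f' (x + t • v)) v : ℝ) - (inner ℝ (f' x) v : ℝ) ≤ Lf * t * ‖v‖ ^ 2 := by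
    intro t ht
    have h1 : (inner ℝ (f' (x + t • v)) v : ℝ) - (inner ℝ (f' x) v : ℝ)
        = (inner ℝ (f' (x + t • v) - f' x) v : ℝ) := by
      rw [inner_sub_left]
    rw [h1]
    have h2 : (inner ℝ (f' (x + t • v) - f' x) v : ℝ) ≤ ‖f' (x + t • v) - f' x‖ * ‖v‖ :=
      real_inner_le_norm _ _
    have h3 : ‖f' (x + t • v) - f' x‖ ≤ Lf * (t * ‖v‖) := by
      have := hlip.dist_le_mul (x + t • v) x
      simp only [dist_eq_norm] at this
      have h4 : ‖x + t • v - x‖ = t * ‖v‖ := by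
        simp [norm_smul, abs_of_nonneg ht.1]
      rw [h4] at this
      simpa [Real.coe_toNNReal _ hLf.le, dist_eq_norm] using this
    calc (inner ℝ (f' (x + t • v) - f' x) v : ℝ) ≤ ‖f' (x + t • v) - f' x‖ * ‖v‖ := h2
      _ ≤ Lf * (t * ‖v‖) * ‖v‖ := by
          apply mul_le_mul_of_nonneg_right h3 (norm_nonneg _)
      _ = Lf * t * ‖v‖ ^ 2 := by ring
  have hint1 : IntervalIntegrable
      (fun t : ℝ => (inner ℝ (f' (x + t • v)) v : ℝ) - (inner ℝ (f' x) v : ℝ))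
      MeasureTheory.volume 0 1 :=
    (hcont.sub continuous_const).intervalIntegrable 0 1
  have hint2 : IntervalIntegrable (fun t : ℝ => Lf * t * ‖v‖ ^ 2)
      MeasureTheory.volume 0 1 := by
    apply Continuous.intervalIntegrable; continuity
  have hmono := intervalIntegral.integral_mono_on (by norm_num : (0:ℝ) ≤ 1)
    hint1 hint2 hbound
  have e1 : ∫ t in (0:ℝ)..1,
      ((inner ℝ (f' (x + t • v)) v : ℝ) - (inner ℝ (f' x) v : ℝ))
      = (f z - f x) - (inner ℝ (f' x) v : ℝ) := by
    rw [intervalIntegral.integral_sub (hcont.intervalIntegrable 0 1)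
      (continuous_const.intervalIntegrable 0 1), key]
    simp
  have e2 : ∫ t in (0:ℝ)..1, Lf * t * ‖v‖ ^ 2 = Lf / 2 * ‖v‖ ^ 2 := by
    have : (fun t : ℝ => Lf * t * ‖v‖ ^ 2) = fun t : ℝ => (Lf * ‖v‖ ^ 2) * t := by
      ext t; ring
    rw [this, intervalIntegral.integral_const_mul, integral_id]
    ring
  rw [e1, e2] at hmono
  linarith

set_option maxHeartbeats 1000000 in
theorem stmt15 {n : ℕ} (f : EuclideanSpace ℝ (Fin n) → ℝ)
    (f' : EuclideanSpace ℝ (Fin n) → EuclideanSpace ℝ (Fin n))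
    (hgrad : ∀ x, HasGradientAt f (f' x) x)
    (Lf : ℝ) (hLf : 0 < Lf) (hlip : LipschitzWith (Real.toNNReal Lf) f')
    (g : EuclideanSpace ℝ (Fin n) → EReal)
    (hproper : ProperFn g) (hlsc : LowerSemicontinuous g)
    (γg : ℝ) (hpb : ∀ γ' ∈ Set.Ioo (0 : ℝ) γg, ProxBddBelow g γ')
    (hargmin : ∃ xs : EuclideanSpace ℝ (Fin n),
      ∀ z, ((f xs : ℝ) : EReal) + g xs ≤ ((f z : ℝ) : EReal) + g z)
    (γ : ℝ) (hγ : γ ∈ Set.Ioo (0 : ℝ) (min (1 / Lf) γg)) :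
    (⨅ x, fbe f f' g γ x) = (⨅ x, ((f x : ℝ) : EReal) + g x) ∧
      {x | ∀ z, fbe f f' g γ x ≤ fbe f f' g γ z} =
        {x | ∀ z, ((f x : ℝ) : EReal) + g x ≤ ((f z : ℝ) : EReal) + g z} := by
  obtain ⟨hγ0, hγmin⟩ := hγ
  have hγ1 : γ < 1 / Lf := hγmin.trans_le (min_le_left _ _)
  set c : ℝ := 1 / (2 * γ) - Lf / 2 with hc
  have hcpos : 0 < c := by
    have h1 : γ * Lf < 1 := by
      have := (lt_div_iff₀ hLf).mp hγ1; linarith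
    rw [hc, sub_pos, div_lt_div_iff₀ (by norm_num) (by positivity)]
    nlinarith
  -- key1 : pointwise strong minorization
  have key1 : ∀ x z : EuclideanSpace ℝ (Fin n),
      ((f z : ℝ) : EReal) + g z + ((c * ‖z - x‖ ^ 2 : ℝ) : EReal)
        ≤ linQ f f' g γ x z := by
    intro x z
    have hr : f z + c * ‖z - x‖ ^ 2
        ≤ f x + (inner ℝ (f' x) (z - x) : ℝ) + ‖z - x‖ ^ 2 / (2 * γ) := by
      have hd := descent_lemma f f' hgrad Lf hLf hlip x z
      have h2 : c * ‖z - x‖ ^ 2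
          = ‖z - x‖ ^ 2 / (2 * γ) - Lf / 2 * ‖z - x‖ ^ 2 := by rw [hc]; ring
      linarith
    have : ((f z : ℝ) : EReal) + g z + ((c * ‖z - x‖ ^ 2 : ℝ) : EReal)
        = ((f z + c * ‖z - x‖ ^ 2 : ℝ) : EReal) + g z := by
      rw [EReal.coe_add, add_right_comm]
    rw [this, linQ]
    exact add_le_add_left (EReal.coe_le_coe_iff.mpr hr) _
  have key2 : ∀ x : EuclideanSpace ℝ (Fin n),
      linQ f f' g γ x x = ((f x : ℝ) : EReal) + g x := by
    intro x; simp [linQ]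
  obtain ⟨xs, hxs⟩ := hargmin
  set m : EReal := ((f xs : ℝ) : EReal) + g xs with hm
  have hmbot : m ≠ ⊥ := by
    rw [hm]
    simp [EReal.add_eq_bot_iff, hproper.2 xs]
  have hmtop : m ≠ ⊤ := by
    obtain ⟨x0, hx0⟩ := hproper.1
    exact ((hxs x0).trans_lt (EReal.add_lt_top (EReal.coe_ne_top _) hx0)).ne
  have key3 : ∀ x, m ≤ fbe f f' g γ x := by
    intro x
    refine le_iInf fun z => le_trans (hxs z) (le_trans ?_ (key1 x z))
    exact le_add_of_nonneg_right (by exact_mod_cast (by positivity : (0:ℝ) ≤ c * ‖z - x‖ ^ 2))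
  have key4 : ∀ x, fbe f f' g γ x ≤ ((f x : ℝ) : EReal) + g x := by
    intro x
    exact (iInf_le _ x).trans_eq (key2 x)
  have hinfφ : (⨅ x, ((f x : ℝ) : EReal) + g x) = m :=
    le_antisymm (iInf_le _ xs) (le_iInf hxs)
  constructor
  · refine le_antisymm (iInf_mono key4) ?_
    rw [hinfφ]; exact le_iInf key3
  · ext x
    simp only [Set.mem_setOf_eq]
    constructor
    · intro hx
      -- x minimizes fbe; show x minimizes φ
      have hfx : fbe f f' g γ x = m :=
        le_antisymm ((hx xs).trans (key4 xs)) (key3 x)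
      have hphix : ((f x : ℝ) : EReal) + g x ≤ m := by
        by_contra hcon
        push_neg at hcon
        set M : ℝ := m.toReal with hMdef
        have hM : (M : EReal) = m := EReal.coe_toReal hmtop hmbot
        obtain ⟨r, hr1, hr2⟩ := EReal.lt_iff_exists_real_btwn.mp hcon
        have hMr : M < r := by rw [← hM] at hr1; exact_mod_cast hr1
        set b1 : ℝ := (r + M) / 2 with hb1
        have hb1M : M < b1 := by rw [hb1]; linarith
        have hb1r : b1 < r := by rw [hb1]; linarith
        -- g x > r - f x
        have hgx : ((r - f x : ℝ) : EReal) < g x := by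
          by_cases htop : g x = ⊤
          · rw [htop]; exact lt_of_le_of_ne le_top (EReal.coe_ne_top _)
          · have hgr := EReal.coe_toReal htop (hproper.2 x)
            rw [← hgr] at hr2 ⊢
            rw [← EReal.coe_add] at hr2
            exact EReal.coe_lt_coe_iff.mpr (by
              have := EReal.coe_lt_coe_iff.mp hr2; linarith)
        have hg := hlsc x _ hgx
        have hcf : ContinuousAt f x := (hgrad x).hasFDerivAt.continuousAt
        have hf : ∀ᶠ z in 𝓝 x, f x - (r - b1) < f z :=
          hcf.eventually (eventually_gt_nhds (by linarith))
        have hev : ∀ᶠ z in 𝓝 x, ((b1 : ℝ) : EReal) < ((f z : ℝ) : EReal) + g z := by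
          filter_upwards [hg, hf] with z h1 h2
          calc ((b1 : ℝ) : EReal) < ((f z + (r - f x) : ℝ) : EReal) := by
                exact_mod_cast (by linarith : b1 < f z + (r - f x))
            _ = ((f z : ℝ) : EReal) + ((r - f x : ℝ) : EReal) := EReal.coe_add _ _
            _ ≤ ((f z : ℝ) : EReal) + g z := add_le_add_right h1.le _
        obtain ⟨ρ, hρ0, hρ⟩ := Metric.eventually_nhds_iff.mp hev
        set b : ℝ := min b1 (M + c * ρ ^ 2) with hb
        have hbM : M < b := lt_min hb1M (lt_add_of_pos_right _ (by positivity))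
        have claim : ∀ z, ((b : ℝ) : EReal) ≤ linQ f f' g γ x z := by
          intro z
          refine le_trans ?_ (key1 x z)
          by_cases hz : dist z x < ρ
          · have h1 := hρ hz
            calc ((b : ℝ) : EReal) ≤ ((b1 : ℝ) : EReal) := by
                  exact_mod_cast min_le_left _ _
              _ ≤ ((f z : ℝ) : EReal) + g z := h1.le
              _ ≤ _ := le_add_of_nonneg_right
                  (by exact_mod_cast (by positivity : (0:ℝ) ≤ c * ‖z - x‖ ^ 2))
          · push_neg at hz
            have hnorm : ρ ≤ ‖z - x‖ := by rwa [dist_eq_norm] at hz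
            have h2 : c * ρ ^ 2 ≤ c * ‖z - x‖ ^ 2 :=
              mul_le_mul_of_nonneg_left (pow_le_pow_left₀ hρ0.le hnorm 2) hcpos.le
            calc ((b : ℝ) : EReal) ≤ ((M + c * ρ ^ 2 : ℝ) : EReal) := by
                  exact_mod_cast min_le_right _ _
              _ = ((M : ℝ) : EReal) + ((c * ρ ^ 2 : ℝ) : EReal) := EReal.coe_add _ _
              _ ≤ (((f z : ℝ) : EReal) + g z) + ((c * ‖z - x‖ ^ 2 : ℝ) : EReal) := by
                  apply add_le_add
                  · rw [hM]; exact hxs z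
                  · exact_mod_cast h2
        have hble : ((b : ℝ) : EReal) ≤ m := by
          rw [← hfx]; exact le_iInf claim
        rw [← hM] at hble
        exact absurd (EReal.coe_le_coe_iff.mp hble) (not_le.mpr hbM)
      intro z
      exact hphix.trans (hxs z)
    · intro hx z
      have hxm : ((f x : ℝ) : EReal) + g x = m :=
        le_antisymm (hx xs) (hxs x)
      exact le_trans ((key4 x).trans_eq hxm) (key3 z)
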